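/- Lemma 2 (closed form for the minimal retry budget, made precise): Let δ ∈ (0,1), C1 > 0, m > 0, L > 0, W_max > 0, let Q : ℝ → ℝ be strictly antitone, and let qinv : ℝ → ℝ satisfy Q(qinv(y)) = y for every y ∈ (0,1). Set T := √m·ln(W_max/C1 + 1) − (ln 2)·L/√m and assume 0 < Q(T) < 1. Then the set S = {k ∈ ℕ : k ≥ 1 and C1·(exp(qinv((1 − δ)^(1/k))/√m + (ln 2)·L/m) − 1) ≤ W_max} of retry budgets satisfying the maximum-transmit-power constraint is nonempty and upward closed, and its least element is k* = max(1, ⌈ln(1 − δ)/ln(Q(T))⌉). -/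

import Mathlib

/-- Lemma 2 (closed form for the minimal retry budget): with
`T := √m·ln(W_max/C1 + 1) − (ln 2)·L/√m` and `0 < Q(T) < 1`, the set of retry budgets
`k ≥ 1` whose tight packet error probability `(1 − δ)^(1/k)` satisfies the
maximum-transmit-power constraint is nonempty and upward closed, and its least element is
`k* = max(1, ⌈ln(1 − δ)/ln(Q(T))⌉)`. -/
theorem minimal_retry_budget_closed_form
    (δ C1 m L Wmax : ℝ) (hδ : δ ∈ Set.Ioo (0 : ℝ) 1)
    (hC1 : 0 < C1) (hm : 0 < m) (hL : 0 < L) (hWmax : 0 < Wmax)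
    (Q qinv : ℝ → ℝ) (hQ : StrictAnti Q)
    (hQqinv : ∀ y ∈ Set.Ioo (0 : ℝ) 1, Q (qinv y) = y)
    (T : ℝ) (hT : T = Real.sqrt m * Real.log (Wmax / C1 + 1) - Real.log 2 * L / Real.sqrt m)
    (hQT : Q T ∈ Set.Ioo (0 : ℝ) 1) :
    let S : Set ℕ := {k | 1 ≤ k ∧
      C1 * (Real.exp (qinv ((1 - δ) ^ ((1 : ℝ) / (k : ℝ))) / Real.sqrt m
        + Real.log 2 * L / m) - 1) ≤ Wmax}
    S.Nonempty ∧ (∀ k ∈ S, ∀ k', k ≤ k' → k' ∈ S) ∧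
      IsLeast S (max 1 ⌈Real.log (1 - δ) / Real.log (Q T)⌉₊) := by
  intro S
  obtain ⟨hδ0, hδ1⟩ := hδ
  obtain ⟨hQT0, hQT1⟩ := hQT
  have h1δ : (0:ℝ) < 1 - δ := by linarith
  have h1δ' : 1 - δ < 1 := by linarith
  have hsm : (0:ℝ) < Real.sqrt m := Real.sqrt_pos.mpr hm
  have hmm : Real.sqrt m * Real.sqrt m = m := Real.mul_self_sqrt hm.le
  have hWC : (0:ℝ) < Wmax / C1 + 1 := by positivity
  have hlogQT : Real.log (Q T) < 0 := Real.log_neg hQT0 hQT1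
  set r := Real.log (1 - δ) / Real.log (Q T) with hr
  have key : ∀ k : ℕ, 1 ≤ k →
      ((C1 * (Real.exp (qinv ((1 - δ) ^ ((1 : ℝ) / (k : ℝ))) / Real.sqrt m
        + Real.log 2 * L / m) - 1) ≤ Wmax) ↔ r ≤ (k : ℝ)) := by
    intro k hk
    have hk0 : (0:ℝ) < (k : ℝ) := by exact_mod_cast hk
    set p := (1 - δ) ^ ((1 : ℝ) / (k : ℝ)) with hp
    have hp0 : 0 < p := Real.rpow_pos_of_pos h1δ _
    have hp1 : p < 1 := Real.rpow_lt_one h1δ.le h1δ' (by positivity)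
    have hQp : Q (qinv p) = p := hQqinv p ⟨hp0, hp1⟩
    have e1 : qinv p / Real.sqrt m + Real.log 2 * L / m
        = (qinv p + Real.log 2 * L / Real.sqrt m) / Real.sqrt m := by
      rw [add_div, div_div, hmm]
    have hlogp : Real.log p = (1 / (k:ℝ)) * Real.log (1 - δ) := Real.log_rpow h1δ _
    calc C1 * (Real.exp (qinv p / Real.sqrt m + Real.log 2 * L / m) - 1) ≤ Wmax
        ↔ Real.exp (qinv p / Real.sqrt m + Real.log 2 * L / m) ≤ Wmax / C1 + 1 := by
          rw [mul_comm, ← le_div_iff₀ hC1, sub_le_iff_le_add]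
      _ ↔ qinv p / Real.sqrt m + Real.log 2 * L / m ≤ Real.log (Wmax / C1 + 1) := by
          rw [← Real.exp_log hWC, Real.exp_le_exp, Real.exp_log hWC]
      _ ↔ qinv p ≤ T := by
          rw [e1, div_le_iff₀ hsm, hT]
          constructor <;> intro h <;> nlinarith
      _ ↔ Q T ≤ p := by rw [← hQ.le_iff_ge, hQp]
      _ ↔ Real.log (Q T) ≤ Real.log p := (Real.log_le_log_iff hQT0 hp0).symm
      _ ↔ r ≤ (k:ℝ) := by
          rw [hlogp, one_div, inv_mul_eq_div, le_div_iff₀ hk0, hr,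
            div_le_iff_of_neg hlogQT, mul_comm ((k:ℝ)) (Real.log (Q T))]
  have hmem : ∀ k : ℕ, k ∈ S ↔ max 1 ⌈r⌉₊ ≤ k := by
    intro k
    constructor
    · rintro ⟨hk1, hk2⟩
      exact max_le hk1 (Nat.ceil_le.mpr ((key k hk1).mp hk2))
    · intro h
      have hk1 : 1 ≤ k := le_trans (le_max_left _ _) h
      have hck : ⌈r⌉₊ ≤ k := le_trans (le_max_right _ _) h
      have hrk : r ≤ (k:ℝ) := le_trans (Nat.le_ceil r) (by exact_mod_cast hck)
      exact ⟨hk1, (key k hk1).mpr hrk⟩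
  exact ⟨⟨_, (hmem _).mpr le_rfl⟩,
    fun k hk k' hkk' => (hmem k').mpr (le_trans ((hmem k).mp hk) hkk'),
    ⟨(hmem _).mpr le_rfl, fun k hk => (hmem k).mp hk⟩⟩
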